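/- For every bounded continuous function f : ℝ → ℝ and every x ∈ ℝ, one has (p*f)(x) = (p₊*f)(x) + (p₋*f)(x); moreover the function x ↦ (p*f)(x) is differentiable on ℝ with derivative (p*f)'(x) = (p₋*f)(x) − (p₊*f)(x). -/

import Mathlib

open MeasureTheory Real Set

/-- The convolution `(p*f)(x) = ∫_ℝ (1/2) e^{-|x-y|} f(y) dy` with `p(x) = (1/2)exp(-|x|)`. -/
noncomputable def pConv (f : ℝ → ℝ) (x : ℝ) : ℝ := ∫ y : ℝ, (1/2) * Real.exp (-|x - y|) * f y

/-- `(p₊*f)(x) = (1/2)∫_{-∞}^{x} e^{y-x} f(y) dy`. -/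
noncomputable def pPlus (f : ℝ → ℝ) (x : ℝ) : ℝ := (1/2) * ∫ y in Set.Iic x, Real.exp (y - x) * f y

/-- `(p₋*f)(x) = (1/2)∫_{x}^{∞} e^{x-y} f(y) dy`. -/
noncomputable def pMinus (f : ℝ → ℝ) (x : ℝ) : ℝ := (1/2) * ∫ y in Set.Ici x, Real.exp (x - y) * f y

/-- FTC for integrals over `Iic`. -/
lemma hasDerivAt_integral_Iic (g : ℝ → ℝ) (hg : Continuous g)
    (hint : ∀ x : ℝ, IntegrableOn g (Iic x)) (x : ℝ) :
    HasDerivAt (fun w => ∫ t in Iic w, g t) (g x) x := by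
  have heq : (fun w => ∫ t in Iic w, g t)
      = fun w => (∫ t in Iic (0:ℝ), g t) + ∫ t in (0:ℝ)..w, g t := by
    funext w
    rw [← intervalIntegral.integral_Iic_sub_Iic (hint 0) (hint w)]
    ring
  rw [heq]
  exact (intervalIntegral.integral_hasDerivAt_right (hg.intervalIntegrable _ _)
    (hg.stronglyMeasurableAtFilter _ _) hg.continuousAt).const_add _

lemma intIic (f : ℝ → ℝ) (hf : Continuous f) (C : ℝ) (hC : ∀ x, |f x| ≤ C) (x : ℝ) :
    IntegrableOn (fun y => Real.exp y * f y) (Iic x) := by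
  refine Integrable.mono' ((integrableOn_exp_Iic x).const_mul C)
    ((Real.continuous_exp.mul hf).aestronglyMeasurable) (ae_of_all _ fun y => ?_)
  rw [Real.norm_eq_abs, abs_mul, abs_of_pos (Real.exp_pos y), mul_comm C]
  exact mul_le_mul_of_nonneg_left (hC y) (Real.exp_pos y).le

lemma intIci (f : ℝ → ℝ) (hf : Continuous f) (C : ℝ) (hC : ∀ x, |f x| ≤ C) (x : ℝ) :
    IntegrableOn (fun y => Real.exp (-y) * f y) (Ici x) := by
  rw [integrableOn_Ici_iff_integrableOn_Ioi]
  refine Integrable.mono' ((exp_neg_integrableOn_Ioi x one_pos).const_mul C)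
    (((Real.continuous_exp.comp continuous_neg).mul hf).aestronglyMeasurable)
    (ae_of_all _ fun y => ?_)
  rw [Real.norm_eq_abs, abs_mul, abs_of_pos (Real.exp_pos (-y)), neg_one_mul, mul_comm C]
  exact mul_le_mul_of_nonneg_left (hC y) (Real.exp_pos (-y)).le

theorem stmt0 (f : ℝ → ℝ) (hf : Continuous f) (hb : ∃ C, ∀ x, |f x| ≤ C) :
    (∀ x : ℝ, pConv f x = pPlus f x + pMinus f x) ∧
    (∀ x : ℝ, HasDerivAt (pConv f) (pMinus f x - pPlus f x) x) := by
  obtain ⟨C, hC⟩ := hb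
  -- integrability facts
  have hIic : ∀ x : ℝ, IntegrableOn (fun y => Real.exp y * f y) (Iic x) := intIic f hf C hC
  have hIci : ∀ x : ℝ, IntegrableOn (fun y => Real.exp (-y) * f y) (Ici x) := intIci f hf C hC
  -- part 1
  have part1 : ∀ x : ℝ, pConv f x = pPlus f x + pMinus f x := by
    intro x
    have h1 : IntegrableOn (fun y => (1/2) * Real.exp (-|x - y|) * f y) (Iic x) := by
      refine IntegrableOn.congr_fun (((hIic x).const_mul ((1/2) * Real.exp (-x))))
        (fun y hy => ?_) measurableSet_Iic
      simp only [mem_Iic] at hy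
      rw [abs_of_nonneg (by linarith : (0:ℝ) ≤ x - y), show -(x - y) = y + (-x) by ring,
        Real.exp_add]
      ring
    have h2 : IntegrableOn (fun y => (1/2) * Real.exp (-|x - y|) * f y) (Ioi x) := by
      rw [← integrableOn_Ici_iff_integrableOn_Ioi]
      refine IntegrableOn.congr_fun (((hIci x).const_mul ((1/2) * Real.exp x)))
        (fun y hy => ?_) measurableSet_Ici
      simp only [mem_Ici] at hy
      rw [abs_of_nonpos (by linarith : x - y ≤ 0), show -(-(x - y)) = x + (-y) by ring,
        Real.exp_add]
      ring
    have hsplit := intervalIntegral.integral_Iic_add_Ioi h1 h2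
    have e1 : (∫ y in Iic x, (1/2) * Real.exp (-|x - y|) * f y) = pPlus f x := by
      rw [pPlus, ← integral_const_mul]
      refine setIntegral_congr_fun measurableSet_Iic fun y hy => ?_
      simp only [mem_Iic] at hy
      rw [abs_of_nonneg (by linarith : (0:ℝ) ≤ x - y), neg_sub]
      ring
    have e2 : (∫ y in Ioi x, (1/2) * Real.exp (-|x - y|) * f y) = pMinus f x := by
      rw [pMinus, ← integral_const_mul, ← integral_Ici_eq_integral_Ioi]
      refine setIntegral_congr_fun measurableSet_Ici fun y hy => ?_
      simp only [mem_Ici] at hy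
      rw [abs_of_nonpos (by linarith : x - y ≤ 0), neg_neg]
      ring
    rw [pConv, ← hsplit, e1, e2]
  refine ⟨part1, fun x => ?_⟩
  -- representation via F and G
  set F : ℝ → ℝ := fun w => ∫ t in Iic w, Real.exp t * f t with hFdef
  set K : ℝ → ℝ := fun w => ∫ t in Iic w, Real.exp t * f (-t) with hKdef
  set G : ℝ → ℝ := fun w => ∫ t in Ici w, Real.exp (-t) * f t with hGdef
  have hGK : ∀ w : ℝ, G w = K (-w) := by
    intro w
    rw [hGdef, hKdef]
    simp only [integral_Ici_eq_integral_Ioi]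
    rw [← integral_comp_neg_Ioi w (fun t => Real.exp t * f (-t))]
    simp
  have hPlusF : ∀ w : ℝ, pPlus f w = (1/2) * (Real.exp (-w) * F w) := by
    intro w
    rw [pPlus, hFdef]
    rw [show (∫ y in Iic w, Real.exp (y - w) * f y)
        = ∫ y in Iic w, Real.exp (-w) * (Real.exp y * f y) by
      refine setIntegral_congr_fun measurableSet_Iic fun y _ => ?_
      rw [show y - w = y + (-w) by ring, Real.exp_add]; ring]
    rw [integral_const_mul]
  have hMinusG : ∀ w : ℝ, pMinus f w = (1/2) * (Real.exp w * G w) := by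
    intro w
    rw [pMinus, hGdef]
    rw [show (∫ y in Ici w, Real.exp (w - y) * f y)
        = ∫ y in Ici w, Real.exp w * (Real.exp (-y) * f y) by
      refine setIntegral_congr_fun measurableSet_Ici fun y _ => ?_
      rw [show w - y = w + (-y) by ring, Real.exp_add]; ring]
    rw [integral_const_mul]
  have hrepr : pConv f = fun w => (1/2) * (Real.exp (-w) * F w + Real.exp w * G w) := by
    funext w
    rw [part1 w, hPlusF w, hMinusG w]; ring
  -- derivatives
  have hF : HasDerivAt F (Real.exp x * f x) x :=
    hasDerivAt_integral_Iic _ (Real.continuous_exp.mul hf) hIic x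
  have hK : HasDerivAt K (Real.exp (-x) * f x) (-x) := by
    have := hasDerivAt_integral_Iic (fun t => Real.exp t * f (-t))
      (Real.continuous_exp.mul (hf.comp continuous_neg))
      (intIic (fun t => f (-t)) (hf.comp continuous_neg) C (fun t => hC (-t))) (-x)
    simpa using this
  have hG : HasDerivAt G (-(Real.exp (-x) * f x)) x := by
    have h1 : HasDerivAt (fun w : ℝ => K (-w)) (Real.exp (-x) * f x * (-1)) x :=
      HasDerivAt.comp x hK (hasDerivAt_neg x)
    have h2 : (fun w : ℝ => K (-w)) = G := by funext w; rw [hGK w]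
    rw [h2] at h1
    convert h1 using 1 <;> ring
  have hexp1 : HasDerivAt (fun w : ℝ => Real.exp (-w)) (-Real.exp (-x)) x := by
    have := (Real.hasDerivAt_exp (-x)).comp x (hasDerivAt_neg x)
    exact this.congr_deriv (by ring)
  have hexp2 : HasDerivAt Real.exp (Real.exp x) x := Real.hasDerivAt_exp x
  have hmain : HasDerivAt (fun w => (1/2) * (Real.exp (-w) * F w + Real.exp w * G w))
      ((1/2) * (Real.exp x * G x) - (1/2) * (Real.exp (-x) * F x)) x := by
    have h := ((hexp1.mul hF).add (hexp2.mul hG)).const_mul ((1:ℝ)/2)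
    exact h.congr_deriv (by ring)
  rw [hrepr, hPlusF x, hMinusG x]
  convert hmain using 1 <;> ring
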